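/- For real β₁, β₂ > 0 and 0 < c < 1, the multiple Meixner second-kind recurrence coefficients b_{2m} = 2m + (c/(1-c))(β₁+3m), b_{2m+1} = 2m+1 + (c/(1-c))(β₂+3m+1), c_{2m} = (c/(1-c)²)m(β₁+β₂+3m-2), c_{2m+1} = (c/(1-c)²)((m+1)β₁+m(β₂+3m+1)), d_{2m} = (c²/(1-c)³)m(m+β₁-1)(m+β₁-β₂), d_{2m+1} = (c²/(1-c)³)m(m+β₂-1)(m+β₂-β₁) are all positive for every m ≥ 1 (and b₀, c₁ > 0) if and only if -1 < β₁ - β₂ < 1. -/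
import Mathlib


/-- Multiple Meixner of the second kind recursion coefficient `b_{2m}`. -/
noncomputable def MIIb2 (β₁ β₂ c : ℝ) (m : ℕ) : ℝ :=
  2 * m + c / (1 - c) * (β₁ + 3 * m)

/-- Multiple Meixner of the second kind recursion coefficient `b_{2m+1}`. -/
noncomputable def MIIb2p1 (β₁ β₂ c : ℝ) (m : ℕ) : ℝ :=
  2 * m + 1 + c / (1 - c) * (β₂ + 3 * m + 1)

/-- Multiple Meixner of the second kind recursion coefficient `c_{2m}`. -/
noncomputable def MIIc2 (β₁ β₂ c : ℝ) (m : ℕ) : ℝ :=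
  c / (1 - c) ^ 2 * m * (β₁ + β₂ + 3 * m - 2)

/-- Multiple Meixner of the second kind recursion coefficient `c_{2m+1}`. -/
noncomputable def MIIc2p1 (β₁ β₂ c : ℝ) (m : ℕ) : ℝ :=
  c / (1 - c) ^ 2 * ((m + 1) * β₁ + m * (β₂ + 3 * m + 1))

/-- Multiple Meixner of the second kind recursion coefficient `d_{2m}`. -/
noncomputable def MIId2 (β₁ β₂ c : ℝ) (m : ℕ) : ℝ :=
  c ^ 2 / (1 - c) ^ 3 * m * (m + β₁ - 1) * (m + β₁ - β₂)

/-- Multiple Meixner of the second kind recursion coefficient `d_{2m+1}`. -/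
noncomputable def MIId2p1 (β₁ β₂ c : ℝ) (m : ℕ) : ℝ :=
  c ^ 2 / (1 - c) ^ 3 * m * (m + β₂ - 1) * (m + β₂ - β₁)

theorem meixner_second_kind_positivity_iff (β₁ β₂ c : ℝ)
    (hβ₁ : β₁ > 0) (hβ₂ : β₂ > 0) (hc0 : 0 < c) (hc1 : c < 1) :
    ((∀ m : ℕ, MIIb2 β₁ β₂ c m > 0 ∧ MIIb2p1 β₁ β₂ c m > 0 ∧ MIIc2p1 β₁ β₂ c m > 0) ∧
      (∀ m : ℕ, 1 ≤ m →
        MIIc2 β₁ β₂ c m > 0 ∧ MIId2 β₁ β₂ c m > 0 ∧ MIId2p1 β₁ β₂ c m > 0))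
    ↔ (-1 < β₁ - β₂ ∧ β₁ - β₂ < 1) := by

  have h1c : (0:ℝ) < 1 - c := by linarith
  have hK : 0 < c ^ 2 / (1 - c) ^ 3 := by positivity
  have hK2 : 0 < c / (1 - c) ^ 2 := by positivity
  have ht : 0 < c / (1 - c) := by positivity
  constructor
  · rintro ⟨_, h2⟩
    have hd2 := (h2 1 le_rfl).2.1
    have hd3 := (h2 1 le_rfl).2.2
    simp only [MIId2, MIId2p1, Nat.cast_one] at hd2 hd3
    constructor
    · by_contra h'
      push_neg at h'
      nlinarith [mul_pos hK hβ₁]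
    · by_contra h'
      push_neg at h'
      nlinarith [mul_pos hK hβ₂]
  · rintro ⟨hlo, hhi⟩
    constructor
    · intro m
      have hm : (0:ℝ) ≤ m := Nat.cast_nonneg m
      refine ⟨?_, ?_, ?_⟩
      · simp only [MIIb2]
        nlinarith
      · simp only [MIIb2p1]
        nlinarith
      · simp only [MIIc2p1]
        exact mul_pos hK2 (by nlinarith)
    · intro m hm1
      have hm : (1:ℝ) ≤ m := by exact_mod_cast hm1
      have hmpos : (0:ℝ) < m := by linarith
      refine ⟨?_, ?_, ?_⟩
      · simp only [MIIc2]
        exact mul_pos (mul_pos hK2 hmpos) (by nlinarith)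
      · simp only [MIId2]
        have : 0 < (m:ℝ) + β₁ - 1 := by linarith
        have : 0 < (m:ℝ) + β₁ - β₂ := by linarith
        positivity
      · simp only [MIId2p1]
        have : 0 < (m:ℝ) + β₂ - 1 := by linarith
        have : 0 < (m:ℝ) + β₂ - β₁ := by linarith
        positivity
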